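/- Let Σ consist of a unary symbol C and a constant a, let R be the TRS with the single rule C(a) → a, and let C^ω denote the unique term satisfying C^ω = C(C^ω). Then C^ω ∞→ a holds, but ¬(C^ω →∞ a); moreover ¬(C^ω ((→∞)⁻¹ ∪ →∞)* a). Hence the inclusions →∞ ⊆ ∞→ and ((→∞)⁻¹ ∪ →∞)* ⊆ ((∞→)⁻¹ ∪ ∞→)* are strict for this TRS. -/

import Mathlib

open Relation

/-- A signature: a type of function symbols together with an arity for each symbol. -/
structure Signature where
  Sym : Type
  ar : Sym → ℕ

/-- The polynomial functor whose final coalgebra is the set of (finite and infinite)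
terms over the signature `Sg` and the set `X` of variables. -/
def TermF (Sg : Signature) (X : Type) : PFunctor.{0} :=
  ⟨X ⊕ Sg.Sym, fun a => Sum.rec (fun _ => Empty) (fun f => Fin (Sg.ar f)) a⟩

/-- The set `T` of finite and infinite terms over `Sg` and `X`, defined coinductively
(as the final coalgebra, i.e. the M-type, of `TermF Sg X`). -/
def Tm (Sg : Signature) (X : Type) : Type := PFunctor.M (TermF Sg X)

variable {Sg : Signature} {X : Type}

/-- The term consisting of a single variable. -/
def Tm.var (x : X) : Tm Sg X := PFunctor.M.mk ⟨Sum.inl x, Empty.elim⟩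

/-- The term `f(t₁,…,tₙ)` with root symbol `f` and arguments `args`. -/
def Tm.node (f : Sg.Sym) (args : Fin (Sg.ar f) → Tm Sg X) : Tm Sg X :=
  PFunctor.M.mk ⟨Sum.inr f, args⟩

/-- One step of the corecursive definition of substitution:
`Sum.inl t` means `t` still has to be substituted, `Sum.inr t` means `t` is copied. -/
def substAux (σ : X → Tm Sg X) :
    (Tm Sg X ⊕ Tm Sg X) → (TermF Sg X) (Tm Sg X ⊕ Tm Sg X) := fun s =>
  match s with
  | Sum.inl t =>
    match PFunctor.M.dest t with
    | ⟨Sum.inl x, _⟩ =>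
        ⟨(PFunctor.M.dest (σ x)).1, fun b => Sum.inr ((PFunctor.M.dest (σ x)).2 b)⟩
    | ⟨Sum.inr f, k⟩ => ⟨Sum.inr f, fun b => Sum.inl (k b)⟩
  | Sum.inr t =>
      ⟨(PFunctor.M.dest t).1, fun b => Sum.inr ((PFunctor.M.dest t).2 b)⟩

/-- Application `tσ` of a substitution `σ : X → T` to a term `t`, defined corecursively. -/
def subst (σ : X → Tm Sg X) (t : Tm Sg X) : Tm Sg X :=
  PFunctor.M.corec (substAux σ) (Sum.inl t)

/-- `Occurs x t`: the variable `x` occurs in the term `t`. -/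
inductive Occurs (x : X) : Tm Sg X → Prop
  | here {t : Tm Sg X} : t = Tm.var x → Occurs x t
  | deeper {t : Tm Sg X} {f : Sg.Sym} {args : Fin (Sg.ar f) → Tm Sg X}
      (i : Fin (Sg.ar f)) : t = Tm.node f args → Occurs x (args i) → Occurs x t

/-- A term rewriting system over `Sg` and `X`: a set of rules `ℓ → r` such that
`ℓ` is not a variable and all variables of `r` occur in `ℓ`. -/
structure TRS (Sg : Signature) (X : Type) where
  rules : Set (Tm Sg X × Tm Sg X)
  lhs_not_var : ∀ l r, (l, r) ∈ rules → ∀ x : X, l ≠ Tm.var x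
  vars_lhs : ∀ l r, (l, r) ∈ rules → ∀ x : X, Occurs x r → Occurs x l

/-- Relations on terms. -/
abbrev TRel (Sg : Signature) (X : Type) := Tm Sg X → Tm Sg X → Prop

/-- The root step relation `→ε := {(ℓσ, rσ) | ℓ → r ∈ R, σ a substitution}`. -/
def RootStep (R : TRS Sg X) : TRel Sg X := fun s t =>
  ∃ l r, (l, r) ∈ R.rules ∧ ∃ σ : X → Tm Sg X, s = subst σ l ∧ t = subst σ r

/-- `StepAt Q p s t`: a `Q`-step at position `p`, i.e. `s = C[u]`, `t = C[v]` with
`(u,v) ∈ Q` and `C` a one-hole context whose hole is at position `p`. -/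
inductive StepAt (Q : TRel Sg X) : List ℕ → Tm Sg X → Tm Sg X → Prop
  | here {s t : Tm Sg X} : Q s t → StepAt Q [] s t
  | deeper {f : Sg.Sym} {ss ts : Fin (Sg.ar f) → Tm Sg X} (i : Fin (Sg.ar f))
      {p : List ℕ} : StepAt Q p (ss i) (ts i) → (∀ j, j ≠ i → ss j = ts j) →
      StepAt Q ((i : ℕ) :: p) (Tm.node f ss) (Tm.node f ts)

/-- The one-step rewrite relation `→` of a TRS: a root step applied inside a
one-hole context. -/
def Step (R : TRS Sg X) : TRel Sg X := fun s t => ∃ p, StepAt (RootStep R) p s t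

/-- The lifting `↓R` of a relation `R`:
`↓R := {(f(s₁,…,sₙ), f(t₁,…,tₙ)) | f ∈ Σ, s₁ R t₁, …, sₙ R tₙ} ∪ Id`. -/
def liftRel (R : TRel Sg X) : TRel Sg X := fun s t =>
  s = t ∨ ∃ (f : Sg.Sym) (ss ts : Fin (Sg.ar f) → Tm Sg X),
    s = Tm.node f ss ∧ t = Tm.node f ts ∧ ∀ i, R (ss i) (ts i)

lemma liftRel_mono : Monotone (liftRel (Sg := Sg) (X := X)) := by
  intro R S h s t hst
  rcases hst with h1 | ⟨f, ss, ts, rfl, rfl, hi⟩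
  · exact Or.inl h1
  · exact Or.inr ⟨f, ss, ts, rfl, rfl, fun i => h _ _ (hi i)⟩

/-- Relational composition `r ∘ s`. -/
def relComp (r s : TRel Sg X) : TRel Sg X := fun a c => ∃ b, r a b ∧ s b c

/-- The monotone operator `S ↦ (→ε ∪ ↓R)* ∘ ↓S` (for a fixed `R`). -/
def iredInnerHom (R : TRS Sg X) (U : TRel Sg X) : TRel Sg X →o TRel Sg X where
  toFun S := relComp
    (ReflTransGen (fun s t => RootStep R s t ∨ liftRel U s t)) (liftRel S)
  monotone' := by
    intro S S' h a c hac
    rcases hac with ⟨b, h1, h2⟩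
    exact ⟨b, h1, liftRel_mono h _ _ h2⟩

/-- The monotone operator `R ↦ νS.((→ε ∪ ↓R)* ∘ ↓S)`. -/
def iredHom (R : TRS Sg X) : TRel Sg X →o TRel Sg X where
  toFun U := OrderHom.gfp (iredInnerHom R U)
  monotone' := by
    intro U V h
    apply OrderHom.gfp.monotone
    intro S a c hac
    rcases hac with ⟨b, h1, h2⟩
    refine ⟨b, ?_, h2⟩
    exact ReflTransGen.mono (fun x y hxy => hxy.imp id (fun h' => liftRel_mono h _ _ h')) _ _ h1

/-- The infinitary rewrite relation `→∞ := μR.νS.((→ε ∪ ↓R)* ∘ ↓S)`. -/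
def ired (R : TRS Sg X) : TRel Sg X := OrderHom.lfp (iredHom R)

/-- The monotone operator `R' ↦ (→ε ∪ ↓R')*`. -/
def biHom (R : TRS Sg X) : TRel Sg X →o TRel Sg X where
  toFun U := ReflTransGen (fun s t => RootStep R s t ∨ liftRel U s t)
  monotone' := by
    intro U V h a b hab
    exact ReflTransGen.mono (fun x y hxy => hxy.imp id (fun h' => liftRel_mono h _ _ h')) _ _ hab

/-- The bi-infinite rewrite relation `∞→ := νR.(→ε ∪ ↓R)*`. -/
def bired (R : TRS Sg X) : TRel Sg X := OrderHom.gfp (biHom R)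

/-- The monotone operator `R' ↦ (←ε ∪ →ε ∪ ↓R')*`. -/
def ieqHom (R : TRS Sg X) : TRel Sg X →o TRel Sg X where
  toFun U := ReflTransGen (fun s t => RootStep R t s ∨ RootStep R s t ∨ liftRel U s t)
  monotone' := by
    intro U V h a b hab
    exact ReflTransGen.mono
      (fun x y hxy => hxy.imp id (fun h' => h'.imp id (fun h'' => liftRel_mono h _ _ h''))) _ _ hab

/-- The infinitary equational reasoning relation `=∞ := νR.(←ε ∪ →ε ∪ ↓R)*`. -/
def ieq (R : TRS Sg X) : TRel Sg X := OrderHom.gfp (ieqHom R)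

/-- `Agree n s t`: the terms `s` and `t` coincide up to depth `n`
(i.e. `d(s,t) ≤ 2^{-n}` for the standard metric `d`). -/
def Agree : ℕ → Tm Sg X → Tm Sg X → Prop
  | 0, _, _ => True
  | n + 1, s, t =>
      (∃ x : X, s = Tm.var x ∧ t = Tm.var x) ∨
      ∃ (f : Sg.Sym) (ss ts : Fin (Sg.ar f) → Tm Sg X),
        s = Tm.node f ss ∧ t = Tm.node f ts ∧ ∀ i, Agree n (ss i) (ts i)

/-- `ConvTo t p l tl`: as `β` approaches the ordinal `l` from below,
`d(t β, tl)` tends to `0` and the depth `|p β|` tends to infinity. -/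
def ConvTo (t : Ordinal.{0} → Tm Sg X) (p : Ordinal.{0} → List ℕ) (l : Ordinal.{0})
    (tl : Tm Sg X) : Prop :=
  (∀ n : ℕ, ∃ β₀ < l, ∀ β, β₀ ≤ β → β < l → Agree n (t β) tl) ∧
  (∀ n : ℕ, ∃ β₀ < l, ∀ β, β₀ ≤ β → β < l → n ≤ (p β).length)

/-- A transfinite sequence of `Q`-steps `(t_β →_{p_β} t_{β+1})_{β<α}` of ordinal
length `α`, weakly continuous and with depths tending to infinity at every limit
ordinal `λ < α`. -/
structure TransSeq (Q : TRel Sg X) (α : Ordinal.{0}) where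
  t : Ordinal.{0} → Tm Sg X
  pos : Ordinal.{0} → List ℕ
  step : ∀ β < α, StepAt Q (pos β) (t β) (t (β + 1))
  conv : ∀ l < α, Order.IsSuccLimit l → ConvTo t pos l (t l)

/-- A transfinite rewrite sequence is strongly convergent if its length is a successor
ordinal (or zero), or there exists a final term to which it converges (with depths
tending to infinity) at the limit. -/
def TransSeq.StronglyConvergent {Q : TRel Sg X} {α : Ordinal.{0}} (s : TransSeq Q α) : Prop :=
  Order.IsSuccLimit α → ∃ tl, ConvTo s.t s.pos α tl

/-- `SCRed Q s t`: there is a strongly convergent transfinite sequence of `Q`-steps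
from `s` to `t`. -/
def SCRed (Q : TRel Sg X) : TRel Sg X := fun a b =>
  ∃ (α : Ordinal.{0}) (s : TransSeq Q α), s.t 0 = a ∧ s.t α = b ∧
    (Order.IsSuccLimit α → ConvTo s.t s.pos α b)

/-- The standard, ordinal-based infinitary rewrite relation `→∞_ord`:
strongly convergent transfinite rewrite sequences. -/
def iredOrd (R : TRS Sg X) : TRel Sg X := SCRed (RootStep R)

-- auxiliary facts about the term constructors
lemma node_ne_var (f : Sg.Sym) (args : Fin (Sg.ar f) → Tm Sg X) (x : X) :
    Tm.node f args ≠ Tm.var x := by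
  intro h
  have h1 := congrArg (fun u => (PFunctor.M.dest u).1) h
  simp only [Tm.node, Tm.var, PFunctor.M.dest_mk] at h1
  exact nomatch (h1 : (Sum.inr f : X ⊕ Sg.Sym) = Sum.inl x)

lemma node_inj_sym {f g : Sg.Sym} {ss : Fin (Sg.ar f) → Tm Sg X}
    {ts : Fin (Sg.ar g) → Tm Sg X} (h : Tm.node f ss = Tm.node g ts) : f = g := by
  have h1 := congrArg (fun u => (PFunctor.M.dest u).1) h
  simp only [Tm.node, PFunctor.M.dest_mk] at h1
  exact Sum.inr.inj h1

lemma node_inj_args {f : Sg.Sym} {ss ts : Fin (Sg.ar f) → Tm Sg X}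
    (h : Tm.node f ss = Tm.node f ts) : ss = ts := by
  have h' : (PFunctor.M.mk ⟨Sum.inr f, ss⟩ : Tm Sg X) = PFunctor.M.mk ⟨Sum.inr f, ts⟩ := h
  have h1 := PFunctor.M.mk_inj h'
  injection h1 with h2 h3

lemma var_inj {x y : X} (h : (Tm.var x : Tm Sg X) = Tm.var y) : x = y := by
  have h1 := congrArg (fun u => (PFunctor.M.dest u).1) h
  simp only [Tm.var, PFunctor.M.dest_mk] at h1
  exact Sum.inl.inj h1

lemma occurs_var_iff {x y : X} : Occurs x (Tm.var y : Tm Sg X) ↔ x = y := by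
  constructor
  · intro h
    cases h with
    | here h => exact (var_inj h.symm)
    | deeper i h _ => exact absurd h.symm (node_ne_var _ _ _)
  · rintro rfl
    exact Occurs.here rfl

lemma occurs_node_iff {x : X} {f : Sg.Sym} {args : Fin (Sg.ar f) → Tm Sg X} :
    Occurs x (Tm.node f args) ↔ ∃ i, Occurs x (args i) := by
  constructor
  · intro h
    cases h with
    | here h => exact absurd h (node_ne_var _ _ _)
    | deeper i h hocc =>
      obtain rfl := node_inj_sym h
      obtain rfl := node_inj_args h
      exact ⟨i, hocc⟩
  · rintro ⟨i, h⟩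
    exact Occurs.deeper i rfl h

/-! ### The TRS with the single rule `C(a) → a` -/

inductive SymCA : Type
  | C : SymCA
  | a : SymCA

/-- The signature with a unary symbol `C` and a constant `a`. -/
def SgCA : Signature := ⟨SymCA, fun s => match s with | .C => 1 | .a => 0⟩

/-- The constant `a`. -/
def tmA : Tm SgCA ℕ := Tm.node SymCA.a Fin.elim0

/-- `C(u)`. -/
def tmC (u : Tm SgCA ℕ) : Tm SgCA ℕ := Tm.node SymCA.C (fun _ => u)

/-- The TRS with the single rule `C(a) → a`. -/
def RCA : TRS SgCA ℕ where
  rules := {(tmC tmA, tmA)}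
  lhs_not_var := by
    rintro l r hm x
    simp only [Set.mem_singleton_iff, Prod.mk.injEq] at hm
    obtain ⟨rfl, rfl⟩ := hm
    exact node_ne_var _ _ _
  vars_lhs := by
    rintro l r hm x h
    simp only [Set.mem_singleton_iff, Prod.mk.injEq] at hm
    obtain ⟨rfl, rfl⟩ := hm
    exact Occurs.deeper (⟨0, by decide⟩ : Fin (SgCA.ar SymCA.C)) rfl h

lemma subst_node (σ : X → Tm Sg X) (f : Sg.Sym) (args : Fin (Sg.ar f) → Tm Sg X) :
    subst σ (Tm.node f args) = Tm.node f (fun i => subst σ (args i)) := by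
  conv_lhs => rw [← PFunctor.M.mk_dest (subst σ (Tm.node f args))]
  unfold subst
  rw [PFunctor.M.dest_corec]
  simp only [substAux, Tm.node, PFunctor.M.dest_mk]
  rfl

lemma fin0_funext {β : Type} (g h : Fin 0 → β) : g = h := funext fun i => i.elim0

lemma subst_tmA (σ : ℕ → Tm SgCA ℕ) : subst σ tmA = tmA := by
  have := subst_node σ SymCA.a Fin.elim0
  unfold tmA
  rw [this]
  exact congrArg _ (fin0_funext _ _)

lemma subst_tmCA (σ : ℕ → Tm SgCA ℕ) : subst σ (tmC tmA) = tmC tmA := by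
  have := subst_node σ SymCA.C (fun _ => tmA)
  rw [tmC, this]
  exact congrArg _ (funext fun i => subst_tmA σ)

lemma rootStep_CA : RootStep RCA (tmC tmA) tmA :=
  ⟨tmC tmA, tmA, rfl, fun _ => tmA, (subst_tmCA _).symm, (subst_tmA _).symm⟩

lemma rootStep_char {s t : Tm SgCA ℕ} (h : RootStep RCA s t) : s = tmC tmA ∧ t = tmA := by
  obtain ⟨l, r, hm, σ, rfl, rfl⟩ := h
  simp only [RCA, Set.mem_singleton_iff, Prod.mk.injEq] at hm
  obtain ⟨rfl, rfl⟩ := hm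
  exact ⟨subst_tmCA σ, subst_tmA σ⟩

/-! ### Basic structural lemmas for the example TRS -/

lemma cω_node {Cω : Tm SgCA ℕ} (hCω : Cω = tmC Cω) {f : SymCA}
    {ts : Fin (SgCA.ar f) → Tm SgCA ℕ} (h : Cω = Tm.node f ts) :
    f = SymCA.C ∧ ∀ i, ts i = Cω := by
  have hf : SymCA.C = f := node_inj_sym (hCω.symm.trans h)
  subst hf
  have hargs := node_inj_args (hCω.symm.trans h)
  exact ⟨rfl, fun i => (congrFun hargs i).symm⟩

lemma cω_ne_tmA {Cω : Tm SgCA ℕ} (hCω : Cω = tmC Cω) : Cω ≠ tmA := by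
  intro h
  exact SymCA.noConfusion (cω_node hCω h).1

lemma cω_ne_tmCA {Cω : Tm SgCA ℕ} (hCω : Cω = tmC Cω) : Cω ≠ tmC tmA := by
  intro h
  have h2 := (cω_node hCω h).2 ⟨0, by decide⟩
  exact cω_ne_tmA hCω h2.symm

lemma tmA_node {f : SymCA} {ts : Fin (SgCA.ar f) → Tm SgCA ℕ}
    (h : tmA = Tm.node f ts) : f = SymCA.a :=
  (node_inj_sym h).symm

lemma cω_not_var {Cω : Tm SgCA ℕ} (hCω : Cω = tmC Cω) (x : ℕ) : Cω ≠ Tm.var x := by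
  intro h
  exact node_ne_var _ _ _ (hCω.symm.trans h)

/-! ### Agreement lemmas -/

lemma agree_refl : ∀ (n : ℕ) (t : Tm Sg X), Agree n t t := by
  intro n
  induction n with
  | zero => intro t; trivial
  | succ n ih =>
    intro t
    rcases h : PFunctor.M.dest t with ⟨a, g⟩
    have ht : t = PFunctor.M.mk ⟨a, g⟩ := by rw [← h]; exact (PFunctor.M.mk_dest (t : (TermF Sg X).M)).symm
    cases a with
    | inl x =>
      left
      refine ⟨x, ?_, ?_⟩ <;>
      · rw [ht, Tm.var]
        congr 1
        congr 1
        funext e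
        exact e.elim
    | inr f =>
      right
      exact ⟨f, g, g, ht, ht, fun i => ih (g i)⟩

lemma agree_all_eq {s t : Tm Sg X} (h : ∀ n, Agree n s t) : s = t := by
  apply PFunctor.M.bisim (fun s t => ∀ n, Agree n s t) _ s t h
  intro x y hxy
  rcases hxy 1 with ⟨v, hx, hy⟩ | ⟨f, ss, ts, hx, hy, _⟩
  · subst hx; subst hy
    exact ⟨Sum.inl v, Empty.elim, Empty.elim, rfl, rfl, fun i => i.elim⟩
  · subst hx; subst hy
    refine ⟨Sum.inr f, ss, ts, rfl, rfl, fun i n => ?_⟩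
    rcases hxy (n + 1) with ⟨v, hx', _⟩ | ⟨g, ss', ts', hx', hy', hag⟩
    · exact absurd hx' (node_ne_var _ _ _)
    · have hg : f = g := node_inj_sym hx'
      subst hg
      have h1 := node_inj_args hx'
      have h2 := node_inj_args hy'
      subst h1; subst h2
      exact hag i

lemma agree_succ_cω {Cω : Tm SgCA ℕ} (hCω : Cω = tmC Cω) {n : ℕ} {v : Tm SgCA ℕ}
    (h : Agree (n + 1) v Cω) :
    ∃ ts : Fin (SgCA.ar SymCA.C) → Tm SgCA ℕ, v = Tm.node SymCA.C ts ∧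
      ∀ i, Agree n (ts i) Cω := by
  rcases h with ⟨x, _, hc⟩ | ⟨g, ss, ts, hv, hc, hag⟩
  · exact absurd hc (cω_not_var hCω x)
  · obtain ⟨hg, hts⟩ := cω_node hCω hc
    subst hg
    exact ⟨ss, hv, fun i => (hts i) ▸ hag i⟩

lemma not_agree_tmA_cω {Cω : Tm SgCA ℕ} (hCω : Cω = tmC Cω) {n : ℕ} :
    ¬ Agree (n + 1) tmA Cω := by
  intro h
  obtain ⟨ts, hA, _⟩ := agree_succ_cω hCω h
  exact SymCA.noConfusion (tmA_node hA)

/-! ### Fixed-point unfolding for `ired` -/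

lemma ired_eq (R : TRS Sg X) :
    ired R = relComp
      (ReflTransGen (fun s t => RootStep R s t ∨ liftRel (ired R) s t))
      (liftRel (ired R)) := by
  have h1 : iredHom R (ired R) = ired R := OrderHom.map_lfp _
  have h2 : OrderHom.gfp (iredInnerHom R (ired R)) = ired R := h1
  calc ired R = OrderHom.gfp (iredInnerHom R (ired R)) := h2.symm
    _ = iredInnerHom R (ired R) (OrderHom.gfp (iredInnerHom R (ired R))) :=
        (OrderHom.map_gfp _).symm
    _ = _ := by rw [h2]; rfl

/-! ### `→∞` maps `C^ω` only to `C^ω` -/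

lemma ired_from_cω {Cω : Tm SgCA ℕ} (hCω : Cω = tmC Cω) :
    ∀ t, ired RCA Cω t → t = Cω := by
  set P : TRel SgCA ℕ := fun s t => s = Cω → t = Cω with hP
  set G : TRel SgCA ℕ := OrderHom.gfp (iredInnerHom RCA P) with hGdef
  have hG : iredInnerHom RCA P G = G := OrderHom.map_gfp _
  -- single steps from Cω stay at Cω
  have sub0 : ∀ y, (RootStep RCA Cω y ∨ liftRel P Cω y) → y = Cω := by
    rintro y (h | h)
    · exact absurd (rootStep_char h).1 (cω_ne_tmCA hCω)
    · rcases h with h | ⟨f, ss, ts, hc, hy, hi⟩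
      · exact h.symm
      · obtain ⟨hf, hss⟩ := cω_node hCω hc
        subst hf
        subst hy
        have hts : ts = fun _ => Cω := funext fun i => hi i (hss i)
        rw [hts]
        exact hCω.symm
  have sub1 : ∀ b, ReflTransGen (fun s t => RootStep RCA s t ∨ liftRel P s t) Cω b →
      b = Cω := by
    intro b h
    induction h with
    | refl => rfl
    | tail _ hst ih => subst ih; exact sub0 _ hst
  -- coinductively, G relates Cω only to Cω
  have sub2 : ∀ v, G Cω v → v = Cω := by
    intro v hv
    refine (PFunctor.M.bisim (fun u v => u = v ∨ (u = Cω ∧ G Cω v)) ?_ Cω v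
      (Or.inr ⟨rfl, hv⟩)).symm
    intro x y hxy
    rcases hxy with rfl | ⟨hx, hGy⟩
    · exact ⟨x.dest.1, x.dest.2, x.dest.2, rfl, rfl, fun i => Or.inl rfl⟩
    · rw [hx]
      clear hx x
      rw [← hG] at hGy
      obtain ⟨b, hrtg, hlift⟩ := hGy
      rw [sub1 b hrtg] at hlift
      rcases hlift with hy | ⟨f, ss, ts, hc, hyy, hi⟩
      · rw [← hy]
        exact ⟨(PFunctor.M.dest Cω).1, (PFunctor.M.dest Cω).2, (PFunctor.M.dest Cω).2, rfl, rfl, fun i => Or.inl rfl⟩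
      · obtain ⟨hf, hss⟩ := cω_node hCω hc
        subst hf
        subst hyy
        refine ⟨Sum.inr SymCA.C, fun _ => Cω, ts, ?_, ?_, fun i => ?_⟩
        · conv_lhs => rw [hCω]
          rfl
        · rfl
        · exact Or.inr ⟨rfl, (hss i) ▸ hi i⟩
  -- `P` is a pre-fixed point of `iredHom RCA`
  have hpre : iredHom RCA P ≤ P := by
    intro u v huv hu
    subst hu
    exact sub2 v huv
  intro t ht
  exact OrderHom.lfp_le (iredHom RCA) hpre Cω t ht rfl

/-! ### `→∞` maps only `C^ω` to `C^ω` -/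

lemma agree_back {Cω : Tm SgCA ℕ} (hCω : Cω = tmC Cω) :
    ∀ (n : ℕ) (u v : Tm SgCA ℕ), ired RCA u v → Agree n v Cω → Agree n u Cω := by
  intro n
  induction n with
  | zero => intro u v _ _; trivial
  | succ n ih =>
    intro u v hir hag
    rw [ired_eq] at hir
    obtain ⟨b, hrtg, hlift⟩ := hir
    -- first transfer agreement from v to b
    have hagb : Agree (n + 1) b Cω := by
      rcases hlift with rfl | ⟨f, ss, ts, hb, hv, hi⟩
      · exact hag
      · obtain ⟨ts2, hv2, hag2⟩ := agree_succ_cω hCω hag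
        have hf : f = SymCA.C := node_inj_sym (hv.symm.trans hv2)
        subst hf
        have hts : ts = ts2 := node_inj_args (hv.symm.trans hv2)
        subst hts
        refine Or.inr ⟨SymCA.C, ss, fun _ => Cω, hb, hCω, fun i => ?_⟩
        exact ih _ _ (hi i) (hag2 i)
    -- then pull it back along the reduction
    clear hlift hag
    induction hrtg using ReflTransGen.head_induction_on with
    | refl => exact hagb
    | head hst _ ihh =>
      rcases hst with h | h
      · obtain ⟨h1, h2⟩ := rootStep_char h
        subst h2
        exact absurd ihh (not_agree_tmA_cω hCω)
      · rcases h with rfl | ⟨f, ss, ts, hx, hy, hi⟩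
        · exact ihh
        · subst hy
          obtain ⟨ts2, hy2, hag2⟩ := agree_succ_cω hCω ihh
          have hf : f = SymCA.C := node_inj_sym hy2
          subst hf
          have hts : ts = ts2 := node_inj_args hy2
          subst hts
          subst hx
          exact Or.inr ⟨SymCA.C, ss, fun _ => Cω, rfl, hCω, fun i =>
            ih _ _ (hi i) (hag2 i)⟩

lemma ired_to_cω {Cω : Tm SgCA ℕ} (hCω : Cω = tmC Cω) :
    ∀ u, ired RCA u Cω → u = Cω := fun u hu =>
  agree_all_eq fun n => agree_back hCω n u Cω hu (agree_refl n Cω)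

/-- For the TRS `{C(a) → a}` and the unique term `C^ω` with `C^ω = C(C^ω)`:
`C^ω ∞→ a` holds, but neither `C^ω →∞ a` nor `C^ω ((→∞)⁻¹ ∪ →∞)* a`; hence the
inclusions `→∞ ⊆ ∞→` and `((→∞)⁻¹ ∪ →∞)* ⊆ ((∞→)⁻¹ ∪ ∞→)*` are strict for this TRS. -/
theorem bired_strict_example (Cω : Tm SgCA ℕ) (hCω : Cω = tmC Cω) :
    bired RCA Cω tmA ∧
    ¬ ired RCA Cω tmA ∧
    ¬ Relation.ReflTransGen (fun s t => ired RCA t s ∨ ired RCA s t) Cω tmA ∧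
    Relation.ReflTransGen (fun s t => bired RCA t s ∨ bired RCA s t) Cω tmA := by
  have h1 : bired RCA Cω tmA := by
    have hle : (fun s t => s = Cω ∧ t = tmA : TRel SgCA ℕ) ≤
        biHom RCA (fun s t => s = Cω ∧ t = tmA) := by
      rintro s t ⟨rfl, rfl⟩
      refine ReflTransGen.head (Or.inr ?_) (ReflTransGen.single (Or.inl rootStep_CA))
      exact Or.inr ⟨SymCA.C, fun _ => s, fun _ => tmA, hCω, rfl, fun i => ⟨rfl, rfl⟩⟩
    exact OrderHom.le_gfp (biHom RCA) hle Cω tmA ⟨rfl, rfl⟩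
  have h3 : ¬ Relation.ReflTransGen (fun s t => ired RCA t s ∨ ired RCA s t) Cω tmA := by
    intro h
    have key : ∀ z, ReflTransGen (fun s t => ired RCA t s ∨ ired RCA s t) Cω z →
        z = Cω := by
      intro z hz
      induction hz with
      | refl => rfl
      | tail _ hst ih =>
        rw [ih] at hst
        rcases hst with h' | h'
        · exact ired_to_cω hCω _ h'
        · exact ired_from_cω hCω _ h'
    exact cω_ne_tmA hCω (key tmA h).symm
  have h2 : ¬ ired RCA Cω tmA := fun h => h3 (ReflTransGen.single (Or.inr h))
  exact ⟨h1, h2, h3, ReflTransGen.single (Or.inr h1)⟩
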